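/- Let F : (Fin N → (Fin 4 → ℝ)) → (Fin 4 → ℝ) be equivariant under the full Lorentz group O(1,3), i.e., F (fun i => Λ.mulVec (p i)) = Λ.mulVec (F p) for every Lorentz transformation Λ and every p. If p : Fin N → (Fin 4 → ℝ) is such that the restriction of the Minkowski bilinear form to V = Submodule.span ℝ (Set.range p) is nondegenerate (i.e., every v ∈ V with ⟪v, w⟫ = 0 for all w ∈ V is zero), then F p ∈ V; that is, the output of a Lorentz-equivariant vector-valued map lies in the linear span of its inputs. -/

import Mathlib

/-- Minkowski inner product of two 4-vectors. -/
def mink (p q : Fin 4 → ℝ) : ℝ :=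
  p 0 * q 0 - p 1 * q 1 - p 2 * q 2 - p 3 * q 3

/-- A Lorentz transformation preserves the Minkowski inner product. -/
def IsLorentz (Λ : Matrix (Fin 4) (Fin 4) ℝ) : Prop :=
  ∀ p q : Fin 4 → ℝ, mink (Λ.mulVec p) (Λ.mulVec q) = mink p q

noncomputable def minkB : LinearMap.BilinForm ℝ (Fin 4 → ℝ) :=
  LinearMap.mk₂ ℝ mink
    (by intros; simp [mink]; ring)
    (by intros; simp [mink]; ring)
    (by intros; simp [mink]; ring)
    (by intros; simp [mink]; ring)

lemma minkB_apply (x y : Fin 4 → ℝ) : minkB x y = mink x y := rfl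

lemma minkB_symm : minkB.IsSymm := by
  constructor; intro x y; simp [minkB_apply, mink]; ring

/-- If `F` is equivariant under the full Lorentz group O(1,3) and the Minkowski
form restricted to the span of the inputs is nondegenerate, then the output of
`F` lies in the span of the inputs. -/
theorem equivariant_output_in_span {N : ℕ}
    (F : (Fin N → (Fin 4 → ℝ)) → (Fin 4 → ℝ))
    (hF : ∀ Λ : Matrix (Fin 4) (Fin 4) ℝ, IsLorentz Λ →
      ∀ p, F (fun i => Λ.mulVec (p i)) = Λ.mulVec (F p))
    (p : Fin N → (Fin 4 → ℝ))
    (hnd : ∀ v ∈ Submodule.span ℝ (Set.range p),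
      (∀ w ∈ Submodule.span ℝ (Set.range p), mink v w = 0) → v = 0) :
    F p ∈ Submodule.span ℝ (Set.range p) := by
  set V := Submodule.span ℝ (Set.range p) with hV
  have hrefl : minkB.IsRefl := minkB_symm.isRefl
  have hres : (minkB.restrict V).Nondegenerate := by
    refine ⟨fun x hx => ?_, fun x hx => ?_⟩
    ext1
    rw [Submodule.coe_zero]
    exact hnd x.1 x.2 (fun w hw => hx ⟨w, hw⟩)
    ext1
    rw [Submodule.coe_zero]
    exact hnd x.1 x.2 (fun w hw => by have := hx ⟨w, hw⟩; rw [← minkB_apply, minkB_symm.eq]; exact this)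
  have hcompl : IsCompl V (minkB.orthogonal V) :=
    LinearMap.BilinForm.isCompl_orthogonal_of_restrict_nondegenerate hrefl hres
  set W := minkB.orthogonal V with hW
  set proj := Submodule.projectionOnto V W hcompl with hproj
  set f : (Fin 4 → ℝ) →ₗ[ℝ] (Fin 4 → ℝ) :=
    (2 : ℝ) • (V.subtype.comp proj) - LinearMap.id with hf
  -- decomposition
  have hdecomp : ∀ x : Fin 4 → ℝ, ∃ v ∈ V, ∃ w ∈ W, x = v + w ∧ f x = v - w := by
    intro x
    have hx : x ∈ V ⊔ W := by rw [hcompl.sup_eq_top]; trivial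
    obtain ⟨v, hv, w, hw, hvw⟩ := Submodule.mem_sup.mp hx
    refine ⟨v, hv, w, hw, hvw.symm, ?_⟩
    have hp : (proj x : Fin 4 → ℝ) = v := by
      rw [← hvw]
      have h1 : proj v = ⟨v, hv⟩ := Submodule.projectionOnto_apply_left hcompl ⟨v, hv⟩
      have h2 : proj w = 0 := Submodule.projectionOnto_apply_right hcompl ⟨w, hw⟩
      rw [map_add, h1, h2, add_zero]
    have hfx : f x = (2 : ℝ) • ((proj x : Fin 4 → ℝ)) - x := by
      simp [hf]
    rw [hfx, hp, ← hvw]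
    ext i
    simp
    ring
  -- cross terms vanish
  have hVW : ∀ v ∈ V, ∀ w ∈ W, minkB v w = 0 := by
    intro v hv w hw
    exact (LinearMap.BilinForm.mem_orthogonal_iff.mp hw) v hv
  have hWV : ∀ w ∈ W, ∀ v ∈ V, minkB w v = 0 := fun w hw v hv => hrefl _ _ (hVW v hv w hw)
  -- f preserves mink
  have hfl : ∀ x y, mink (f x) (f y) = mink x y := by
    intro x y
    obtain ⟨v, hv, w, hw, hxvw, hfx⟩ := hdecomp x
    obtain ⟨v', hv', w', hw', hyvw, hfy⟩ := hdecomp y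
    rw [← minkB_apply, ← minkB_apply, hfx, hfy, hxvw, hyvw]
    simp only [map_add, map_sub, LinearMap.add_apply, LinearMap.sub_apply]
    rw [hVW v hv w' hw', hWV w hw v' hv']
    ring
  -- Λ := matrix of f
  set Λ := LinearMap.toMatrix' f with hΛ
  have hmul : ∀ x, Λ.mulVec x = f x := by
    intro x
    rw [← Matrix.toLin'_apply, hΛ, Matrix.toLin'_toMatrix']
  have hLor : IsLorentz Λ := by
    intro x y; rw [hmul, hmul]; exact hfl x y
  have hfix : ∀ i, Λ.mulVec (p i) = p i := by
    intro i
    rw [hmul]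
    obtain ⟨v, hv, w, hw, hvw, hfx⟩ := hdecomp (p i)
    have hpi : p i ∈ V := Submodule.subset_span ⟨i, rfl⟩
    have hwV : w ∈ V := by
      have : w = p i - v := by rw [hvw]; ring
      rw [this]; exact Submodule.sub_mem _ hpi hv
    have hw0 : w = 0 := by
      have := hcompl.inf_eq_bot
      have hmem : w ∈ V ⊓ W := ⟨hwV, hw⟩
      rw [this] at hmem
      exact hmem
    rw [hfx, hw0, hvw, hw0]; simp
  have key := hF Λ hLor p
  simp only [hfix] at key
  have : F p = f (F p) := by
    rw [← hmul]; exact key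
  obtain ⟨v, hv, w, hw, hvw, hfx⟩ := hdecomp (F p)
  have hw0 : w = 0 := by
    have h2 : v + w = v - w := by rw [← hvw, ← hfx, ← this]
    have : (2 : ℝ) • w = 0 := by
      have := sub_eq_zero.mpr h2
      have h3 : v + w - (v - w) = (2:ℝ) • w := by ext i; simp; ring
      rw [← h3]; rw [sub_eq_zero]; exact h2
    have h4 := smul_eq_zero.mp this
    rcases h4 with h | h
    · norm_num at h
    · exact h
  rw [hvw, hw0, add_zero]; exact hv
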